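/- Let A₁, …, A_n be pairwise disjoint finite sets, and for each i let B_i be a set of two-element subsets of A_i, let (φ_i, ψ_i) be a pair of conservative binary operations on A_i forming a tournament pair on B_i, and let m_i be a conservative ternary operation on A_i that is arithmetical on the set of two-element subsets of A_i not in B_i. Let G = A₁ ∪ ⋯ ∪ A_n. Then there exist conservative operations φ', ψ' : G → G → G and m' : G → G → G → G such that the restrictions of φ', ψ', m' to each A_i coincide with φ_i, ψ_i, m_i respectively, the pair (φ', ψ') is a tournament pair on B = (B₁ ∪ ⋯ ∪ B_n) ∪ { {a, b} : a ∈ A_i, b ∈ A_j, i ≠ j }, and m' is arithmetical on the union over i of the sets of two-element subsets of A_i not in B_i. -/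
import Mathlib


/-- A binary operation is conservative if it always returns one of its
arguments. -/
def Conservative2 {D : Type*} (f : D → D → D) : Prop :=
  ∀ x y : D, f x y = x ∨ f x y = y

/-- A ternary operation is conservative if it always returns one of its
arguments. -/
def Conservative3 {D : Type*} (m : D → D → D → D) : Prop :=
  ∀ x y z : D, m x y z = x ∨ m x y z = y ∨ m x y z = z

/-- `(φ, ψ)` is a tournament pair on a set `B` of two-element subsets of `D`:
on pairs in `B` both operations are commutative and they disagree, and on
two-element sets outside `B` both are the first projection. -/
def TournamentPair {D : Type*} (φ ψ : D → D → D) (B : Set (Set D)) : Prop :=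
  (∀ x y : D, x ≠ y → ({x, y} : Set D) ∈ B →
      φ x y = φ y x ∧ ψ x y = ψ y x ∧ φ x y ≠ ψ x y) ∧
  (∀ x y : D, x ≠ y → ({x, y} : Set D) ∉ B → φ x y = x ∧ ψ x y = x)

/-- `m` is arithmetical on a set `S` of two-element subsets of `D`. -/
def ArithmeticalOn {D : Type*} (m : D → D → D → D) (S : Set (Set D)) : Prop :=
  ∀ s ∈ S, ∀ x ∈ s, ∀ y ∈ s, m x x y = y ∧ m y x x = y ∧ m y x y = y

section Glue

variable {n : ℕ} {A : Fin n → Type*}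

def glueφ (φ : ∀ i, A i → A i → A i) : (Σ i, A i) → (Σ i, A i) → Σ i, A i
  | ⟨i, x⟩, ⟨j, y⟩ =>
    if h : j = i then ⟨i, φ i x (h ▸ y)⟩
    else if i < j then ⟨i, x⟩ else ⟨j, y⟩

def glueψ (ψ : ∀ i, A i → A i → A i) : (Σ i, A i) → (Σ i, A i) → Σ i, A i
  | ⟨i, x⟩, ⟨j, y⟩ =>
    if h : j = i then ⟨i, ψ i x (h ▸ y)⟩
    else if i < j then ⟨j, y⟩ else ⟨i, x⟩

def glueM (m : ∀ i, A i → A i → A i → A i) :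
    (Σ i, A i) → (Σ i, A i) → (Σ i, A i) → Σ i, A i
  | ⟨i, x⟩, ⟨j, y⟩, ⟨k, z⟩ =>
    if h : j = i then
      if h' : k = i then ⟨i, m i x (h ▸ y) (h' ▸ z)⟩ else ⟨i, x⟩
    else ⟨i, x⟩

@[simp] lemma glueφ_same (φ : ∀ i, A i → A i → A i) (i : Fin n) (x y : A i) :
    glueφ φ ⟨i, x⟩ ⟨i, y⟩ = ⟨i, φ i x y⟩ := by
  simp [glueφ]

@[simp] lemma glueψ_same (ψ : ∀ i, A i → A i → A i) (i : Fin n) (x y : A i) :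
    glueψ ψ ⟨i, x⟩ ⟨i, y⟩ = ⟨i, ψ i x y⟩ := by
  simp [glueψ]

@[simp] lemma glueM_same (m : ∀ i, A i → A i → A i → A i) (i : Fin n) (x y z : A i) :
    glueM m ⟨i, x⟩ ⟨i, y⟩ ⟨i, z⟩ = ⟨i, m i x y z⟩ := by
  simp [glueM]

lemma glueφ_cross (φ : ∀ i, A i → A i → A i) {i j : Fin n} (h : j ≠ i) (x : A i) (y : A j) :
    glueφ φ ⟨i, x⟩ ⟨j, y⟩ = if i < j then ⟨i, x⟩ else ⟨j, y⟩ := by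
  simp [glueφ, h]

lemma glueψ_cross (ψ : ∀ i, A i → A i → A i) {i j : Fin n} (h : j ≠ i) (x : A i) (y : A j) :
    glueψ ψ ⟨i, x⟩ ⟨j, y⟩ = if i < j then ⟨j, y⟩ else ⟨i, x⟩ := by
  simp [glueψ, h]

end Glue

/-- Gluing multi-sorted operations: tournament pairs `(φ i, ψ i)` on `B i` and
arithmetical operations `m i` on the complements of `B i` on pairwise disjoint
finite sets `A i` extend to operations on the disjoint union `G = Σ i, A i`
forming a tournament pair on the union of the `B i` together with all
cross-sort pairs, and an operation arithmetical on the union of the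
complements. -/
theorem multi_sorted_gluing {n : ℕ} (A : Fin n → Type*) [∀ i, Fintype (A i)]
    (B : ∀ i, Set (Set (A i)))
    (hB : ∀ i, ∀ b ∈ B i, ∃ x y : A i, x ≠ y ∧ b = {x, y})
    (φ ψ : ∀ i, A i → A i → A i) (m : ∀ i, A i → A i → A i → A i)
    (hφ : ∀ i, Conservative2 (φ i)) (hψ : ∀ i, Conservative2 (ψ i))
    (hm : ∀ i, Conservative3 (m i))
    (htp : ∀ i, TournamentPair (φ i) (ψ i) (B i))
    (har : ∀ i, ArithmeticalOn (m i)
      {s : Set (A i) | (∃ x y : A i, x ≠ y ∧ s = {x, y}) ∧ s ∉ B i}) :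
    ∃ (φ' ψ' : (Σ i, A i) → (Σ i, A i) → (Σ i, A i))
      (m' : (Σ i, A i) → (Σ i, A i) → (Σ i, A i) → (Σ i, A i)),
      Conservative2 φ' ∧ Conservative2 ψ' ∧ Conservative3 m' ∧
      (∀ i, ∀ x y : A i, φ' ⟨i, x⟩ ⟨i, y⟩ = ⟨i, φ i x y⟩) ∧
      (∀ i, ∀ x y : A i, ψ' ⟨i, x⟩ ⟨i, y⟩ = ⟨i, ψ i x y⟩) ∧
      (∀ i, ∀ x y z : A i, m' ⟨i, x⟩ ⟨i, y⟩ ⟨i, z⟩ = ⟨i, m i x y z⟩) ∧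
      TournamentPair φ' ψ'
        ({s : Set (Σ i, A i) | ∃ i, ∃ x y : A i, x ≠ y ∧
            ({x, y} : Set (A i)) ∈ B i ∧
            s = ({⟨i, x⟩, ⟨i, y⟩} : Set (Σ i, A i))} ∪
         {s : Set (Σ i, A i) | ∃ i j, i ≠ j ∧ ∃ (x : A i) (y : A j),
            s = ({⟨i, x⟩, ⟨j, y⟩} : Set (Σ i, A i))}) ∧
      ArithmeticalOn m'
        {s : Set (Σ i, A i) | ∃ i, ∃ x y : A i, x ≠ y ∧
            ({x, y} : Set (A i)) ∉ B i ∧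
            s = ({⟨i, x⟩, ⟨i, y⟩} : Set (Σ i, A i))} := by
  classical
  refine ⟨glueφ φ, glueψ ψ, glueM m, ?_, ?_, ?_,
    fun i x y => glueφ_same φ i x y, fun i x y => glueψ_same ψ i x y,
    fun i x y z => glueM_same m i x y z, ⟨?_, ?_⟩, ?_⟩
  · -- Conservative2 φ'
    rintro ⟨i, x⟩ ⟨j, y⟩
    by_cases h : j = i
    · subst h
      rcases hφ j x y with h | h <;> simp [h]
    · rw [glueφ_cross _ h]
      split <;> simp
  · -- Conservative2 ψ'
    rintro ⟨i, x⟩ ⟨j, y⟩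
    by_cases h : j = i
    · subst h
      rcases hψ j x y with h | h <;> simp [h]
    · rw [glueψ_cross _ h]
      split <;> simp
  · -- Conservative3 m'
    rintro ⟨i, x⟩ ⟨j, y⟩ ⟨k, z⟩
    by_cases h : j = i
    · subst h
      by_cases h' : k = j
      · subst h'
        rcases hm k x y z with h | h | h <;> simp [h]
      · simp [glueM, h']
    · simp [glueM, h]
  · -- tournament pair, first part
    rintro ⟨i, x⟩ ⟨j, y⟩ hne hmem
    by_cases hij : j = i
    · subst hij
      have hxy : x ≠ y := fun h => hne (by rw [h])
      rcases hmem with ⟨i', x', y', hxy', hB', hs⟩ | ⟨i', j', hij', a, b, hs⟩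
      · rw [Set.pair_eq_pair_iff] at hs
        have hBm : ({x, y} : Set (A j)) ∈ B j := by
          rcases hs with ⟨h1, h2⟩ | ⟨h1, h2⟩
          · rcases Sigma.mk.inj_iff.mp h1 with ⟨rfl, hx⟩
            rcases Sigma.mk.inj_iff.mp h2 with ⟨-, hy⟩
            rw [eq_of_heq hx, eq_of_heq hy]; exact hB'
          · rcases Sigma.mk.inj_iff.mp h1 with ⟨rfl, hx⟩
            rcases Sigma.mk.inj_iff.mp h2 with ⟨-, hy⟩
            rw [eq_of_heq hx, eq_of_heq hy, Set.pair_comm]; exact hB'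
        obtain ⟨e1, e2, e3⟩ := (htp j).1 x y hxy hBm
        refine ⟨by simp [e1], by simp [e2], ?_⟩
        simp only [glueφ_same, glueψ_same, Sigma.mk.inj_iff, heq_eq_eq, true_and, ne_eq]
        exact e3
      · exfalso
        rw [Set.pair_eq_pair_iff] at hs
        rcases hs with ⟨h1, h2⟩ | ⟨h1, h2⟩
        · exact hij' ((congrArg Sigma.fst h1).symm.trans (congrArg Sigma.fst h2))
        · exact hij' ((congrArg Sigma.fst h2).symm.trans (congrArg Sigma.fst h1))
    · rw [glueφ_cross _ hij, glueφ_cross _ (Ne.symm hij),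
        glueψ_cross _ hij, glueψ_cross _ (Ne.symm hij)]
      rcases lt_or_gt_of_ne (Ne.symm hij) with h | h <;>
        refine ⟨by simp [h, asymm h], by simp [h, asymm h], ?_⟩ <;>
        simp only [if_pos h, if_neg (asymm h)] <;>
        first
          | exact fun hc => hij (congrArg Sigma.fst hc).symm
          | exact fun hc => hij (congrArg Sigma.fst hc)
  · -- tournament pair, second part
    rintro ⟨i, x⟩ ⟨j, y⟩ hne hnot
    by_cases hij : j = i
    · subst hij
      have hxy : x ≠ y := fun h => hne (by rw [h])
      have hBm : ({x, y} : Set (A j)) ∉ B j := fun hc =>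
        hnot (Or.inl ⟨j, x, y, hxy, hc, rfl⟩)
      obtain ⟨e1, e2⟩ := (htp j).2 x y hxy hBm
      exact ⟨by simp [e1], by simp [e2]⟩
    · exact absurd (Or.inr ⟨i, j, Ne.symm hij, x, y, rfl⟩) hnot
  · -- arithmetical
    rintro s ⟨i, a, b, hab, hnB, rfl⟩ p hp q hq
    have key := har i {a, b} ⟨⟨a, b, hab, rfl⟩, hnB⟩
    simp only [Set.mem_insert_iff, Set.mem_singleton_iff] at hp hq
    have haa : a ∈ ({a, b} : Set (A i)) := Set.mem_insert a _
    have hbb : b ∈ ({a, b} : Set (A i)) := Set.mem_insert_of_mem _ rfl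
    rcases hp with rfl | rfl <;> rcases hq with rfl | rfl <;>
      simp only [glueM_same, Sigma.mk.inj_iff, heq_eq_eq, true_and]
    · exact key a haa a haa
    · exact key a haa b hbb
    · exact key b hbb a haa
    · exact key b hbb b hbb
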